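/- arXiv:2403.14655 — 2 statements merged into one kernel-verified Lean document; each statement's English description precedes it below -/
import Mathlib

section
/- Let K ≥ 1 and N be natural numbers, and let x : Fin K → EuclideanSpace ℝ (Fin (N+1)) be a family of unit vectors (‖x i‖ = 1 for all i). For each pair (i, j), let θ(i,j) := Real.arccos ⟪x i, x j⟫, and define the mean E[θ] := (1/K²) Σ_{i,j} θ(i,j) and the variance Var(θ) := (1/K²) Σ_{i,j} θ(i,j)² − E[θ]². Then (1/(K²·(N+1))) · Σ_{i,j} ‖x i − x j‖² ≤ (1/(N+1)) · (Var(θ) + E[θ]²). -/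
lemma chord_le_angle (c : ℝ) (h1 : -1 ≤ c) (h2 : c ≤ 1) :
    2 - 2 * c ≤ Real.arccos c ^ 2 := by
  set θ := Real.arccos c with hθ
  have hc : Real.cos θ = c := Real.cos_arccos h1 h2
  have hθ0 : 0 ≤ θ := Real.arccos_nonneg c
  have hθπ : θ ≤ Real.pi := Real.arccos_le_pi c
  have hsin : Real.sin (θ / 2) ≤ θ / 2 := Real.sin_le (by linarith)
  have hsin0 : 0 ≤ Real.sin (θ / 2) :=
    Real.sin_nonneg_of_nonneg_of_le_pi (by linarith) (by linarith [Real.pi_pos])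
  have hcos : Real.cos θ = 1 - 2 * Real.sin (θ / 2) ^ 2 := by
    have h := Real.cos_two_mul (θ / 2)
    have h2 : 2 * (θ / 2) = θ := by ring
    rw [h2] at h
    nlinarith [Real.sin_sq_add_cos_sq (θ / 2)]
  have hsq : Real.sin (θ / 2) ^ 2 ≤ (θ / 2) ^ 2 := by nlinarith
  nlinarith

theorem variance_of_differences_le_second_moment_of_angles
    (K N : ℕ) (hK : 1 ≤ K)
    (x : Fin K → EuclideanSpace ℝ (Fin (N + 1)))
    (hx : ∀ i, ‖x i‖ = 1) :
    (1 / ((K : ℝ) ^ 2 * (N + 1))) * ∑ i, ∑ j, ‖x i - x j‖ ^ 2 ≤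
      (1 / ((N : ℝ) + 1)) *
        (((1 / (K : ℝ) ^ 2) *
            ∑ i, ∑ j, (Real.arccos (inner ℝ (x i) (x j)) : ℝ) ^ 2 -
          ((1 / (K : ℝ) ^ 2) *
            ∑ i, ∑ j, Real.arccos ((inner ℝ (x i) (x j)) : ℝ)) ^ 2) +
         ((1 / (K : ℝ) ^ 2) *
            ∑ i, ∑ j, Real.arccos ((inner ℝ (x i) (x j)) : ℝ)) ^ 2) := by
  have hsum : (∑ i, ∑ j, ‖x i - x j‖ ^ 2) ≤
      ∑ i, ∑ j, (Real.arccos (inner ℝ (x i) (x j)) : ℝ) ^ 2 := by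
    refine Finset.sum_le_sum fun i _ => Finset.sum_le_sum fun j _ => ?_
    have hc : |(inner ℝ (x i) (x j) : ℝ)| ≤ 1 := by
      have := abs_real_inner_le_norm (x i) (x j)
      rwa [hx i, hx j, one_mul] at this
    rw [abs_le] at hc
    have hn : ‖x i - x j‖ ^ 2 = 2 - 2 * (inner ℝ (x i) (x j) : ℝ) := by
      rw [norm_sub_sq_real, hx i, hx j]; ring
    rw [hn]
    exact chord_le_angle _ hc.1 hc.2
  have hK0 : (0 : ℝ) < (K : ℝ) ^ 2 := by positivity
  have hN0 : (0 : ℝ) < (N : ℝ) + 1 := by positivity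
  have key : (1 / ((K : ℝ) ^ 2 * (N + 1))) * ∑ i, ∑ j, ‖x i - x j‖ ^ 2 ≤
      (1 / ((K : ℝ) ^ 2 * (N + 1))) *
        ∑ i, ∑ j, (Real.arccos (inner ℝ (x i) (x j)) : ℝ) ^ 2 := by
    apply mul_le_mul_of_nonneg_left hsum
    positivity
  calc _ ≤ _ := key
    _ = _ := by field_simp; ring
end

section
/- Let K ≥ 1 and N be natural numbers, and let x : Fin K → EuclideanSpace ℝ (Fin (N+1)) be a family of unit vectors (‖x i‖ = 1 for all i). Define for all (i, j, k) ∈ Fin K × Fin K × Fin (N+1) the scaled differences Δ(i,j,k) := (1/(2·K·√(N+1))) · ((x i) k − (x j) k), let μ := (1/(K²·(N+1))) Σ_{i,j,k} Δ(i,j,k) and Var(Δ) := (1/(K²·(N+1))) Σ_{i,j,k} (Δ(i,j,k) − μ)². For each pair (i, j), let θ(i,j) := Real.arccos ⟪x i, x j⟫, E[θ] := (1/K²) Σ_{i,j} θ(i,j) and Var(θ) := (1/K²) Σ_{i,j} θ(i,j)² − E[θ]². Then Var(Δ) ≤ (1/(N+1)) · (Var(θ) + E[θ]²). -/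
set_option maxHeartbeats 1000000

theorem variance_of_scaled_differences_le_second_moment_of_angles
    (K N : ℕ) (hK : 1 ≤ K)
    (x : Fin K → EuclideanSpace ℝ (Fin (N + 1)))
    (hx : ∀ i, ‖x i‖ = 1)
    (Δ : Fin K → Fin K → Fin (N + 1) → ℝ)
    (hΔ : ∀ i j k, Δ i j k =
      (1 / (2 * (K : ℝ) * Real.sqrt ((N : ℝ) + 1))) * (x i k - x j k))
    (μ : ℝ)
    (hμ : μ = (1 / ((K : ℝ) ^ 2 * ((N : ℝ) + 1))) * ∑ i, ∑ j, ∑ k, Δ i j k)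
    (VarΔ : ℝ)
    (hVarΔ : VarΔ =
      (1 / ((K : ℝ) ^ 2 * ((N : ℝ) + 1))) * ∑ i, ∑ j, ∑ k, (Δ i j k - μ) ^ 2)
    (θ : Fin K → Fin K → ℝ)
    (hθ : ∀ i j, θ i j = Real.arccos ((inner ℝ (x i) (x j)) : ℝ))
    (Eθ : ℝ) (hEθ : Eθ = (1 / (K : ℝ) ^ 2) * ∑ i, ∑ j, θ i j)
    (Varθ : ℝ)
    (hVarθ : Varθ = (1 / (K : ℝ) ^ 2) * (∑ i, ∑ j, (θ i j) ^ 2) - Eθ ^ 2) :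
    VarΔ ≤ (1 / ((N : ℝ) + 1)) * (Varθ + Eθ ^ 2) := by
  have hKpos : (0:ℝ) < K := by exact_mod_cast hK
  have hK1 : (1:ℝ) ≤ K := by exact_mod_cast hK
  have hNpos : (0:ℝ) < (N:ℝ) + 1 := by positivity
  set c : ℝ := (K:ℝ)^2 * ((N:ℝ) + 1) with hc
  have hcpos : 0 < c := by positivity
  -- step 1: variance ≤ second moment
  set S1 : ℝ := ∑ i, ∑ j, ∑ k, Δ i j k with hS1
  set S2 : ℝ := ∑ i, ∑ j, ∑ k, (Δ i j k)^2 with hS2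
  have card_eq : (∑ i : Fin K, ∑ j : Fin K, ∑ _k : Fin (N+1), μ^2) = c * μ^2 := by
    simp [Finset.sum_const, hc]
    ring
  have expand : (∑ i, ∑ j, ∑ k, (Δ i j k - μ)^2) = S2 - 2*μ*S1 + c*μ^2 := by
    have : ∀ i j k, (Δ i j k - μ)^2 = (Δ i j k)^2 - 2*μ*(Δ i j k) + μ^2 := by
      intro i j k; ring
    simp only [this, Finset.sum_add_distrib, Finset.sum_sub_distrib, ← Finset.mul_sum,
      card_eq]
    rfl
  have hμ' : c * μ = S1 := by
    rw [hμ]; field_simp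
  have step1 : (∑ i, ∑ j, ∑ k, (Δ i j k - μ)^2) ≤ S2 := by
    rw [expand]
    have h2 : 2*μ*S1 = 2*c*μ^2 := by rw [← hμ']; ring
    nlinarith [mul_nonneg hcpos.le (sq_nonneg μ)]
  -- step 2: pointwise bound ∑_k Δ² ≤ θ²
  have key : ∀ i j, (∑ k, (Δ i j k)^2) ≤ (θ i j)^2 := by
    intro i j
    set t : ℝ := (inner ℝ (x i) (x j) : ℝ) with ht
    have habs : |t| ≤ 1 := by
      calc |t| ≤ ‖x i‖ * ‖x j‖ := abs_real_inner_le_norm _ _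
        _ = 1 := by rw [hx, hx]; ring
    have ht1 : t ≤ 1 := (abs_le.1 habs).2
    have ht2 : -1 ≤ t := (abs_le.1 habs).1
    have hcos : Real.cos (θ i j) = t := by
      rw [hθ]; exact Real.cos_arccos ht2 ht1
    have hbound : 2 - 2*t ≤ (θ i j)^2 := by
      have := Real.one_sub_sq_div_two_le_cos (x := θ i j)
      rw [hcos] at this
      linarith
    have hsum : (∑ k, (x i k - x j k)^2) = 2 - 2*t := by
      have hnorm : ‖x i - x j‖^2 = 2 - 2*t := by
        rw [@norm_sub_sq_real, hx, hx]; ring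
      have : (∑ k, (x i k - x j k)^2) = ‖x i - x j‖^2 := by
        rw [EuclideanSpace.norm_eq, Real.sq_sqrt (by positivity)]
        refine Finset.sum_congr rfl fun k _ => ?_
        rw [Real.norm_eq_abs, sq_abs]
        simp
      rw [this, hnorm]
    set a : ℝ := 1 / (2 * (K : ℝ) * Real.sqrt ((N : ℝ) + 1)) with ha
    have hsqrt : (1:ℝ) ≤ Real.sqrt ((N:ℝ)+1) := by
      have h := Real.sqrt_le_sqrt (show (1:ℝ) ≤ (N:ℝ)+1 by linarith)
      rwa [Real.sqrt_one] at h
    have ha2 : a^2 ≤ 1 := by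
      rw [ha, div_pow, one_pow]
      rw [div_le_one (by positivity)]
      have hks : 1 ≤ (K:ℝ) * Real.sqrt ((N:ℝ)+1) := by nlinarith
      nlinarith
    have hΔsum : (∑ k, (Δ i j k)^2) = a^2 * (2 - 2*t) := by
      rw [← hsum, Finset.mul_sum]
      congr 1; ext k; rw [hΔ]; ring
    have h2t : 0 ≤ 2 - 2*t := by linarith
    calc (∑ k, (Δ i j k)^2) = a^2 * (2 - 2*t) := hΔsum
      _ ≤ 1 * (2 - 2*t) := by nlinarith [sq_nonneg a]
      _ = 2 - 2*t := by ring
      _ ≤ (θ i j)^2 := hbound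
  have step2 : S2 ≤ ∑ i, ∑ j, (θ i j)^2 := by
    apply Finset.sum_le_sum; intro i _
    apply Finset.sum_le_sum; intro j _
    exact key i j
  -- conclusion
  rw [hVarΔ, hVarθ]
  have : (1/((N:ℝ)+1)) * ((1 / (K : ℝ) ^ 2) * (∑ i, ∑ j, (θ i j) ^ 2) - Eθ ^ 2 + Eθ ^ 2)
      = (1/c) * (∑ i, ∑ j, (θ i j) ^ 2) := by
    rw [hc]; field_simp; ring
  rw [this]
  have hfinal : S2 ≤ ∑ i, ∑ j, (θ i j)^2 := step2
  have h1c : (0:ℝ) < 1/c := by positivity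
  calc (1/c) * (∑ i, ∑ j, ∑ k, (Δ i j k - μ)^2) ≤ (1/c) * S2 := by
        apply mul_le_mul_of_nonneg_left step1 (le_of_lt h1c)
    _ ≤ (1/c) * (∑ i, ∑ j, (θ i j)^2) := mul_le_mul_of_nonneg_left hfinal (le_of_lt h1c)
end
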